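/- Let X be a complete operator system in a unital C*-algebra A and let L : X → [0,∞] be a Lipschitz seminorm. Suppose that for every ε > 0 there exist a complete operator system X_ε with a Lipschitz seminorm L_ε such that the image of {y ∈ X_ε : L_ε(y) ≤ 1} in X_ε/ℂ·1 is totally bounded for the quotient norm (i.e. (X_ε,L_ε) is a compact quantum metric space), together with unital linear maps Φ_ε : X → X_ε and Ψ_ε : X_ε → X such that: (1) there is a constant C > 0 with L_ε(Φ_ε(x)) ≤ C·L(x) for all x ∈ X and ‖Ψ_ε(y)‖ ≤ C·‖y‖ for all y ∈ X_ε; (2) ‖Ψ_ε(Φ_ε(x)) − x‖ ≤ ε·L(x) for all x ∈ X. Then the image of {x ∈ X : L(x) ≤ 1} under the quotient map X → X/ℂ·1 is totally bounded for the quotient norm (i.e. (X,L) is a compact quantum metric space). -/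

import Mathlib

open scoped ENNReal

universe u v

/-- A bundled unital C*-algebra. -/
structure BundledCStarAlg : Type (v + 1) where
  carrier : Type v
  [inst : CStarAlgebra carrier]

attribute [instance] BundledCStarAlg.inst

/-- `L : X → [0,∞]` is a Lipschitz seminorm on the operator system `X`:  it is subadditive
and absolutely homogeneous on `X`, its domain `{x ∈ X : L x < ∞}` is norm-dense in `X`, its
kernel contains the scalars `ℂ·1`, and it is invariant under the adjoint operation. -/
def IsLipschitzSeminormOn {A : Type*} [CStarAlgebra A] (X : Submodule ℂ A)
    (L : A → ℝ≥0∞) : Prop :=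
  (∀ x ∈ X, ∀ y ∈ X, L (x + y) ≤ L x + L y) ∧
  (∀ (c : ℂ), ∀ x ∈ X, L (c • x) = (‖c‖₊ : ℝ≥0∞) * L x) ∧
  (∀ x ∈ X, x ∈ closure {y : A | y ∈ X ∧ L y < ⊤}) ∧
  (∀ c : ℂ, L (c • (1 : A)) = 0) ∧
  (∀ x ∈ X, L (star x) = L x)

/-- Corollary 2.7 of the paper: if `(X,L)` can be approximated by compact quantum metric
spaces `(X_ε, L_ε)` via unital linear maps `Φ_ε : X → X_ε` and `Ψ_ε : X_ε → X` which are
bounded for the Lipschitz seminorms resp. the norms and satisfy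
`‖Ψ_ε(Φ_ε(x)) − x‖ ≤ ε·L(x)`, then the image of the `L`-unit ball of `X` under the quotient
map `X → X/ℂ·1` is totally bounded for the quotient norm, i.e. `(X,L)` is a compact quantum
metric space. -/
theorem statement1 {A : Type u} [CStarAlgebra A] (X : Submodule ℂ A)
    (hXclosed : IsClosed (X : Set A)) (hXstar : ∀ x ∈ X, star x ∈ X) (hX1 : (1 : A) ∈ X)
    (L : A → ℝ≥0∞) (hL : IsLipschitzSeminormOn X L)
    (happrox : ∀ ε : ℝ, 0 < ε →
      ∃ (𝔅 : BundledCStarAlg.{v}) (Y : Submodule ℂ 𝔅.carrier)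
        (Lε : 𝔅.carrier → ℝ≥0∞) (Φ : ↥X →ₗ[ℂ] ↥Y) (Ψ : ↥Y →ₗ[ℂ] ↥X),
        -- `Y` is a complete operator system in the unital C*-algebra `𝔅.carrier`
        IsClosed (Y : Set 𝔅.carrier) ∧ (∀ y ∈ Y, star y ∈ Y) ∧ (1 : 𝔅.carrier) ∈ Y ∧
        -- `Lε` is a Lipschitz seminorm on `Y`
        IsLipschitzSeminormOn Y Lε ∧
        -- `(Y, Lε)` is a compact quantum metric space: the image of the `Lε`-unit ball of
        -- `Y` in the quotient `Y/ℂ·1` is totally bounded for the quotient norm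
        (∀ r : ℝ, 0 < r → ∃ F : Finset 𝔅.carrier,
          (↑F : Set 𝔅.carrier) ⊆ (Y : Set 𝔅.carrier) ∧
          ∀ y ∈ Y, Lε y ≤ 1 → ∃ z ∈ F, ∃ c : ℂ, ‖y - z - c • (1 : 𝔅.carrier)‖ < r) ∧
        -- `Φ` and `Ψ` are unital
        (∀ x : ↥X, (x : A) = 1 → ((Φ x : ↥Y) : 𝔅.carrier) = 1) ∧
        (∀ y : ↥Y, (y : 𝔅.carrier) = 1 → ((Ψ y : ↥X) : A) = 1) ∧
        -- (1) `Φ` is bounded for the Lipschitz seminorms, `Ψ` is bounded for the norms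
        (∃ C : ℝ, 0 < C ∧
          (∀ x : ↥X, Lε ((Φ x : ↥Y) : 𝔅.carrier) ≤ ENNReal.ofReal C * L (x : A)) ∧
          (∀ y : ↥Y, ‖((Ψ y : ↥X) : A)‖ ≤ C * ‖(y : 𝔅.carrier)‖)) ∧
        -- (2) `‖Ψ(Φ(x)) − x‖ ≤ ε·L(x)` for all `x ∈ X`
        (∀ x : ↥X,
          (‖((Ψ (Φ x) : ↥X) : A) - (x : A)‖₊ : ℝ≥0∞) ≤ ENNReal.ofReal ε * L (x : A))) :
    ∀ r : ℝ, 0 < r → ∃ F : Finset A, (↑F : Set A) ⊆ (X : Set A) ∧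
      ∀ x ∈ X, L x ≤ 1 → ∃ y ∈ F, ∃ c : ℂ, ‖x - y - c • (1 : A)‖ < r := by
  classical
  intro r hr
  have hr2 : (0:ℝ) < r/2 := by linarith
  obtain ⟨𝔅, Y, Lε, Φ, Ψ, hYclosed, hYstar, hY1, hLε, hYcqms, hΦ1, hΨ1,
    ⟨C, hC, hΦL, hΨn⟩, hΨΦ⟩ := happrox (r/2) hr2
  have hr' : (0:ℝ) < r/(2*C^2) := by positivity
  obtain ⟨F', hF'sub, hF'⟩ := hYcqms (r/(2*C^2)) hr'
  refine ⟨F'.attach.image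
    (fun p => ((Ψ (((C:ℝ):ℂ) • (⟨p.1, hF'sub p.2⟩ : ↥Y)) : ↥X) : A)), ?_, ?_⟩
  · intro a ha
    simp only [Finset.coe_image, Set.mem_image] at ha
    obtain ⟨p, _, rfl⟩ := ha
    exact (Ψ _).2
  · intro x hx hLx
    set x' : ↥X := ⟨x, hx⟩ with hx'def
    set y : ↥Y := ((C⁻¹ : ℝ) : ℂ) • Φ x' with hydef
    have hLεy : Lε (y : 𝔅.carrier) ≤ 1 := by
      have h1 := hLε.2.1 ((C⁻¹:ℝ):ℂ) ((Φ x' : ↥Y) : 𝔅.carrier) (Φ x').2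
      have hcoe : (y : 𝔅.carrier) = ((C⁻¹:ℝ):ℂ) • ((Φ x' : ↥Y) : 𝔅.carrier) := rfl
      rw [hcoe, h1]
      have hnn : (‖((C⁻¹:ℝ):ℂ)‖₊ : ℝ≥0∞) = ENNReal.ofReal C⁻¹ := by
        rw [Complex.nnnorm_real, Real.nnnorm_of_nonneg (by positivity),
          ENNReal.ofReal, Real.toNNReal_of_nonneg (by positivity)]
      rw [hnn]
      calc ENNReal.ofReal C⁻¹ * Lε ((Φ x' : ↥Y) : 𝔅.carrier)
          ≤ ENNReal.ofReal C⁻¹ * (ENNReal.ofReal C * L x) := by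
            gcongr
            exact hΦL x'
        _ ≤ ENNReal.ofReal C⁻¹ * (ENNReal.ofReal C * 1) := by gcongr
        _ = ENNReal.ofReal (C⁻¹ * C) := by
            rw [mul_one, ← ENNReal.ofReal_mul (by positivity)]
        _ = 1 := by rw [inv_mul_cancel₀ hC.ne', ENNReal.ofReal_one]
    obtain ⟨z, hzF, c, hz⟩ := hF' (y : 𝔅.carrier) y.2 hLεy
    set w : ↥Y := ((C:ℝ):ℂ) • (⟨z, hF'sub hzF⟩ : ↥Y) with hwdef
    set c' : ℂ := ((C:ℝ):ℂ) * c with hc'def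
    refine ⟨((Ψ w : ↥X) : A), ?_, c', ?_⟩
    · apply Finset.mem_image.mpr
      exact ⟨⟨z, hzF⟩, Finset.mem_attach _ _, rfl⟩
    · set u : ↥Y := Φ x' - w - c' • (⟨1, hY1⟩ : ↥Y) with hudef
      have hucoe : (u : 𝔅.carrier)
          = ((C:ℝ):ℂ) • ((y : 𝔅.carrier) - z - c • (1 : 𝔅.carrier)) := by
        simp only [hudef, hwdef, hydef, hc'def, Submodule.coe_sub, Submodule.coe_smul]
        rw [smul_sub, smul_sub, smul_smul, mul_comm ((C:ℝ):ℂ) ((C⁻¹:ℝ):ℂ)]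
        push_cast
        rw [smul_smul, inv_mul_cancel₀ (by exact_mod_cast hC.ne' : ((C:ℝ):ℂ) ≠ 0), one_smul,
          mul_smul]
      have hunorm : ‖(u : 𝔅.carrier)‖ < C * (r/(2*C^2)) := by
        rw [hucoe, norm_smul]
        have : ‖((C:ℝ):ℂ)‖ = C := by
          rw [Complex.norm_real, Real.norm_of_nonneg hC.le]
        rw [this]
        exact (mul_lt_mul_iff_right₀ hC).mpr hz
      have hΨu : ‖((Ψ u : ↥X) : A)‖ < r/2 := by
        calc ‖((Ψ u : ↥X) : A)‖ ≤ C * ‖(u : 𝔅.carrier)‖ := hΨn u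
          _ < C * (C * (r/(2*C^2))) := by
              exact (mul_lt_mul_iff_right₀ hC).mpr hunorm
          _ = r/2 := by
              field_simp
      have hΨucoe : ((Ψ u : ↥X) : A)
          = ((Ψ (Φ x') : ↥X) : A) - ((Ψ w : ↥X) : A) - c' • (1 : A) := by
        have h1A : ((Ψ (⟨1, hY1⟩ : ↥Y) : ↥X) : A) = 1 := hΨ1 _ rfl
        simp only [hudef, map_sub, map_smul, Submodule.coe_sub, Submodule.coe_smul, h1A]
      have hdiff : ‖((Ψ (Φ x') : ↥X) : A) - x‖ ≤ r/2 := by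
        have h := hΨΦ x'
        have h2 : (‖((Ψ (Φ x') : ↥X) : A) - x‖₊ : ℝ≥0∞) ≤ ENNReal.ofReal (r/2) := by
          calc (‖((Ψ (Φ x') : ↥X) : A) - x‖₊ : ℝ≥0∞)
              ≤ ENNReal.ofReal (r/2) * L x := h
            _ ≤ ENNReal.ofReal (r/2) * 1 := by gcongr
            _ = ENNReal.ofReal (r/2) := mul_one _
        rw [ENNReal.ofReal, ENNReal.coe_le_coe] at h2
        calc ‖((Ψ (Φ x') : ↥X) : A) - x‖
            = ((‖((Ψ (Φ x') : ↥X) : A) - x‖₊ : NNReal) : ℝ) := rfl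
          _ ≤ ((r/2).toNNReal : ℝ) := by exact_mod_cast h2
          _ = r/2 := Real.coe_toNNReal _ hr2.le
      have key : x - ((Ψ w : ↥X) : A) - c' • (1 : A)
          = -(((Ψ (Φ x') : ↥X) : A) - x) + ((Ψ u : ↥X) : A) := by
        rw [hΨucoe]; abel
      calc ‖x - ((Ψ w : ↥X) : A) - c' • (1 : A)‖
          = ‖-(((Ψ (Φ x') : ↥X) : A) - x) + ((Ψ u : ↥X) : A)‖ := by rw [key]
        _ ≤ ‖-(((Ψ (Φ x') : ↥X) : A) - x)‖ + ‖((Ψ u : ↥X) : A)‖ := norm_add_le _ _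
        _ = ‖((Ψ (Φ x') : ↥X) : A) - x‖ + ‖((Ψ u : ↥X) : A)‖ := by rw [norm_neg]
        _ < r/2 + r/2 := by exact add_lt_add_of_le_of_lt hdiff hΨu
        _ = r := by ring
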